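/- arXiv:2512.23677 — 2 statements merged into one kernel-verified Lean document; each statement's English description precedes it below -/
import Mathlib

section
/- Let a₀ be an odd integer with a₀ ≠ 1, and let w₀ = v₂(a₀ − 1). If w₀ ≤ 2, then a₀ is not the square of any element of the ring ℤ₂ of 2-adic integers. If w₀ ≥ 3, then there exists α ∈ ℤ₂ with α^(2^(w₀−2)) = a₀, but there is no β ∈ ℤ₂ with β^(2^(w₀−1)) = a₀. -/
open PadicInt

lemma two_dvd_iff (x : ℤ_[2]) : (2 : ℤ_[2]) ∣ x ↔ PadicInt.toZMod x = 0 := by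
  have h : ((2:ℕ) : ℤ_[2]) ∣ x ↔ x ∈ Ideal.span {((2:ℕ) : ℤ_[2])} := (Ideal.mem_span_singleton).symm
  rw [show ((2:ℤ_[2])) = ((2:ℕ) : ℤ_[2]) by norm_cast, h, ← PadicInt.maximalIdeal_eq_span_p,
    ← PadicInt.ker_toZMod, RingHom.mem_ker]

lemma even_mul_succ (s : ℤ_[2]) : (2 : ℤ_[2]) ∣ s * (s + 1) := by
  rw [two_dvd_iff]
  have : ∀ z : ZMod 2, z * (z + 1) = 0 := by decide
  simpa using this (PadicInt.toZMod s)

lemma two_pow_dvd_cast_iff (n : ℕ) (a : ℤ) :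
    (2 : ℤ_[2]) ^ n ∣ (a : ℤ_[2]) ↔ (2 ^ n : ℤ) ∣ a := by
  have := PadicInt.pow_p_dvd_int_iff (p := 2) n a
  simpa using this

lemma odd_sq_dvd (β : ℤ_[2]) (hβ : ¬ (2 : ℤ_[2]) ∣ β) : (2 : ℤ_[2]) ^ 3 ∣ β ^ 2 - 1 := by
  have h1 : (2 : ℤ_[2]) ∣ β - 1 := by
    rw [two_dvd_iff] at hβ ⊢
    have : ∀ z : ZMod 2, z ≠ 0 → z - 1 = 0 := by decide
    simpa using this _ hβ
  obtain ⟨s, hs⟩ := h1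
  obtain ⟨t, ht⟩ := even_mul_succ s
  have : β ^ 2 - 1 = 2 ^ 3 * t := by
    have hβ1 : β = 2 * s + 1 := by linear_combination hs
    rw [hβ1]; linear_combination 4 * ht
  exact ⟨t, this⟩

lemma sq_step {x : ℤ_[2]} {m : ℕ} (hm : 1 ≤ m) (h : (2 : ℤ_[2]) ^ m ∣ x - 1) :
    (2 : ℤ_[2]) ^ (m + 1) ∣ x ^ 2 - 1 := by
  have h2 : (2 : ℤ_[2]) ∣ x + 1 := by
    have : (2 : ℤ_[2]) ∣ x - 1 := dvd_trans (dvd_pow_self 2 (by omega)) h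
    obtain ⟨c, hc⟩ := this
    exact ⟨c + 1, by linear_combination hc⟩
  have : x ^ 2 - 1 = (x - 1) * (x + 1) := by ring
  rw [this, pow_succ]
  exact mul_dvd_mul h h2

lemma tower_dvd (β : ℤ_[2]) (hβ : ¬ (2 : ℤ_[2]) ∣ β) :
    ∀ k, 1 ≤ k → (2 : ℤ_[2]) ^ (k + 2) ∣ β ^ (2 ^ k) - 1 := by
  intro k
  induction k with
  | zero => omega
  | succ n ih =>
    intro _
    rcases Nat.eq_or_lt_of_le (Nat.one_le_iff_ne_zero.mpr (Nat.succ_ne_zero n)) with h1 | h1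
    · have hn0 : n = 0 := by omega
      subst hn0; simpa using odd_sq_dvd β hβ
    · have hn : 1 ≤ n := by omega
      have := sq_step (x := β ^ (2 ^ n)) (m := n + 2) (by omega) (ih hn)
      have hp : β ^ (2 ^ (n + 1)) = (β ^ (2 ^ n)) ^ 2 := by
        rw [← pow_mul, pow_succ]
      rw [hp]
      exact this

lemma exists_sqrt {a : ℤ_[2]} {m : ℕ} (hm : 3 ≤ m) (h : (2 : ℤ_[2]) ^ m ∣ a - 1) :
    ∃ b : ℤ_[2], b ^ 2 = a ∧ (2 : ℤ_[2]) ^ (m - 1) ∣ b - 1 := by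
  classical
  -- Hensel's lemma for F = X^2 - C a at the point 1
  set F : Polynomial ℤ_[2] := Polynomial.X ^ 2 - Polynomial.C a with hF
  have heval : F.eval 1 = 1 - a := by simp [hF]
  have hderiv : F.derivative.eval 1 = 2 := by
    simp [hF, Polynomial.derivative_sub, Polynomial.derivative_X_pow, one_add_one_eq_two]
  have hnorm1 : ‖F.eval 1‖ ≤ (2 : ℝ) ^ (-(m : ℤ)) := by
    rw [heval]
    have hd' : (2 : ℤ_[2]) ^ m ∣ 1 - a := by
      rw [show (1 : ℤ_[2]) - a = -(a - 1) by ring]; exact dvd_neg.mpr h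
    have hd : (1 - a) ∈ Ideal.span {((2 : ℤ_[2])) ^ m} := Ideal.mem_span_singleton.mpr hd'
    have := (PadicInt.norm_le_pow_iff_mem_span_pow (1 - a) m).mpr (by
      simpa using hd)
    simpa using this
  have hnorm : ‖F.eval 1‖ < ‖F.derivative.eval 1‖ ^ 2 := by
    rw [hderiv]
    have h2 : ‖(2 : ℤ_[2])‖ = 2⁻¹ := by
      have := PadicInt.norm_p (p := 2); simpa using this
    rw [h2]
    refine lt_of_le_of_lt hnorm1 ?_
    have : ((2:ℝ)⁻¹) ^ 2 = (2:ℝ) ^ (-(2:ℤ)) := by norm_num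
    rw [this]
    exact zpow_lt_zpow_right₀ one_lt_two (by omega)
  obtain ⟨z, hz, -⟩ := hensels_lemma (p := 2) hnorm
  have hz2 : z ^ 2 = a := by
    have : z ^ 2 - a = 0 := by simpa [hF] using hz
    exact sub_eq_zero.mp this
  -- now adjust sign so that b ≡ 1 mod 2^(m-1)
  have hzz : (2 : ℤ_[2]) ^ m ∣ (z - 1) * (z + 1) := by
    rw [show (z - 1) * (z + 1) = z ^ 2 - 1 by ring, hz2]; exact h
  have hprime : Prime (2 : ℤ_[2]) := by
    have := PadicInt.prime_p (p := 2); simpa using this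
  have h2zm : (2 : ℤ_[2]) ∣ (z - 1) * (z + 1) := dvd_trans (dvd_pow_self 2 (by omega)) hzz
  have hboth : (2 : ℤ_[2]) ∣ z - 1 ∧ (2 : ℤ_[2]) ∣ z + 1 := by
    rcases hprime.dvd_or_dvd h2zm with h' | h'
    · exact ⟨h', by obtain ⟨c, hc⟩ := h'; exact ⟨c + 1, by linear_combination hc⟩⟩
    · exact ⟨by obtain ⟨c, hc⟩ := h'; exact ⟨c - 1, by linear_combination hc⟩, h'⟩
  have hnot42 : ¬ (2 : ℤ_[2]) ^ 2 ∣ (2 : ℤ_[2]) := by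
    intro hc
    have : (2 : ℤ_[2]) ^ 2 ∣ ((2 : ℤ) : ℤ_[2]) := by simpa using hc
    rw [two_pow_dvd_cast_iff] at this
    omega
  have hcancel : ∀ v : ℤ_[2], ¬ (2 : ℤ_[2]) ∣ v → IsUnit v := by
    intro v hv
    by_contra hu
    exact hv ((PadicInt.norm_lt_one_iff_dvd v).mp (PadicInt.mem_nonunits.mp hu))
  by_cases h4 : (2 : ℤ_[2]) ^ 2 ∣ z - 1
  · -- then z+1 = 2v with v a unit, so 2^(m-1) ∣ z - 1
    obtain ⟨v, hv⟩ := hboth.2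
    have hvu : ¬ (2 : ℤ_[2]) ∣ v := by
      intro hc
      apply hnot42
      have h4z1 : (2 : ℤ_[2]) ^ 2 ∣ z + 1 := by
        obtain ⟨c, hc'⟩ := hc; exact ⟨c, by rw [hv, hc']; ring⟩
      have := dvd_sub h4z1 h4
      simpa [show z + 1 - (z - 1) = (2 : ℤ_[2]) by ring] using this
    have hmm : (2 : ℤ_[2]) * (2 : ℤ_[2]) ^ (m - 1) ∣ (2 : ℤ_[2]) * ((z - 1) * v) := by
      have e1 : (2 : ℤ_[2]) * (2 : ℤ_[2]) ^ (m - 1) = 2 ^ m := by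
        rw [← pow_succ']; congr 1; omega
      have e2 : (2 : ℤ_[2]) * ((z - 1) * v) = (z - 1) * (z + 1) := by rw [hv]; ring
      rw [e1, e2]; exact hzz
    have h2ne : (2 : ℤ_[2]) ≠ 0 := fun hc => hnot42 (by rw [hc]; exact dvd_zero _)
    have hdd : (2 : ℤ_[2]) ^ (m - 1) ∣ (z - 1) * v :=
      (mul_dvd_mul_iff_left h2ne).mp hmm
    exact ⟨z, hz2, ((hcancel v hvu).dvd_mul_right).mp hdd⟩
  · -- z - 1 = 2u with u a unit, so 2^(m-1) ∣ z + 1; take b = -z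
    obtain ⟨u, hu⟩ := hboth.1
    have huu : ¬ (2 : ℤ_[2]) ∣ u := by
      intro hc
      apply h4
      obtain ⟨c, hc'⟩ := hc; exact ⟨c, by rw [hu, hc']; ring⟩
    have hmm : (2 : ℤ_[2]) * (2 : ℤ_[2]) ^ (m - 1) ∣ (2 : ℤ_[2]) * ((z + 1) * u) := by
      have e1 : (2 : ℤ_[2]) * (2 : ℤ_[2]) ^ (m - 1) = 2 ^ m := by
        rw [← pow_succ']; congr 1; omega
      have e2 : (2 : ℤ_[2]) * ((z + 1) * u) = (z - 1) * (z + 1) := by rw [hu]; ring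
      rw [e1, e2]; exact hzz
    have h2ne : (2 : ℤ_[2]) ≠ 0 := fun hc => hnot42 (by rw [hc]; exact dvd_zero _)
    have hdd : (2 : ℤ_[2]) ^ (m - 1) ∣ (z + 1) * u :=
      (mul_dvd_mul_iff_left h2ne).mp hmm
    refine ⟨-z, by rw [neg_pow]; simpa using hz2, ?_⟩
    have : (2 : ℤ_[2]) ^ (m - 1) ∣ z + 1 := ((hcancel u huu).dvd_mul_right).mp hdd
    have := this.neg_right
    simpa [show -(z + 1) = -z - 1 by ring] using this

lemma exists_two_pow_root : ∀ k : ℕ, ∀ a : ℤ_[2], (2 : ℤ_[2]) ^ (k + 2) ∣ a - 1 →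
    ∃ α : ℤ_[2], α ^ (2 ^ k) = a := by
  intro k
  induction k with
  | zero => intro a _; exact ⟨a, by norm_num⟩
  | succ n ih =>
    intro a ha
    obtain ⟨b, hb2, hbd⟩ := exists_sqrt (m := n + 3) (by omega) ha
    obtain ⟨α, hα⟩ := ih b (by simpa using hbd)
    exact ⟨α, by rw [pow_succ, pow_mul, hα, hb2]⟩


/-- **Lemma (2-power roots in `ℤ₂`).** Let `a₀` be an odd integer with `a₀ ≠ 1` and
`w₀ = v₂(a₀ − 1)`.  If `w₀ ≤ 2` then `a₀` is not a square in `ℤ₂`.  If `w₀ ≥ 3` then `a₀` is a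
`2^{w₀−2}`-th power in `ℤ₂` but not a `2^{w₀−1}`-th power in `ℤ₂`. -/
theorem stmt_15 (a₀ : ℤ) (ha₀ : Odd a₀) (hne : a₀ ≠ 1)
    (w₀ : ℕ) (hw₀ : w₀ = padicValInt 2 (a₀ - 1)) :
    (w₀ ≤ 2 → ¬ ∃ x : ℤ_[2], x ^ 2 = (a₀ : ℤ_[2])) ∧
    (3 ≤ w₀ →
      (∃ α : ℤ_[2], α ^ (2 ^ (w₀ - 2)) = (a₀ : ℤ_[2])) ∧
      ¬ ∃ β : ℤ_[2], β ^ (2 ^ (w₀ - 1)) = (a₀ : ℤ_[2])) := by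
  have hA : ((a₀ : ℤ_[2]) - 1) = (((a₀ - 1 : ℤ)) : ℤ_[2]) := by push_cast; ring
  have hne0 : a₀ - 1 ≠ 0 := fun hc => hne (by omega)
  have hdvd : (2 ^ w₀ : ℤ) ∣ a₀ - 1 := by
    rw [hw₀]; exact_mod_cast padicValInt_dvd (p := 2) (a₀ - 1)
  have hndvd : ¬ (2 ^ (w₀ + 1) : ℤ) ∣ a₀ - 1 := by
    intro hc
    have := (padicValInt_dvd_iff (p := 2) (w₀ + 1) (a₀ - 1)).mp (by exact_mod_cast hc)
    rcases this with h0 | hle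
    · exact hne0 h0
    · omega
  have hodd : ¬ (2 : ℤ_[2]) ∣ (a₀ : ℤ_[2]) := by
    intro hc
    have : (2 : ℤ_[2]) ^ 1 ∣ ((a₀ : ℤ) : ℤ_[2]) := by simpa using hc
    rw [two_pow_dvd_cast_iff] at this
    simp at this
    exact ((Int.not_odd_iff_even.mpr ⟨this.choose, by linarith [this.choose_spec]⟩)) ha₀
  constructor
  · rintro hw ⟨x, hx⟩
    have hxodd : ¬ (2 : ℤ_[2]) ∣ x := by
      intro hc
      exact hodd (by rw [← hx]; exact dvd_pow hc two_ne_zero)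
    have h8 : (2 : ℤ_[2]) ^ 3 ∣ (a₀ : ℤ_[2]) - 1 := by
      rw [← hx]; exact odd_sq_dvd x hxodd
    rw [hA, two_pow_dvd_cast_iff] at h8
    have := (padicValInt_dvd_iff (p := 2) 3 (a₀ - 1)).mp (by exact_mod_cast h8)
    rcases this with h0 | hle
    · exact hne0 h0
    · omega
  · intro hw
    have hdvd2 : (2 : ℤ_[2]) ^ w₀ ∣ (a₀ : ℤ_[2]) - 1 := by
      rw [hA, two_pow_dvd_cast_iff]; exact_mod_cast hdvd
    constructor
    · obtain ⟨α, hα⟩ := exists_two_pow_root (w₀ - 2) (a₀ : ℤ_[2]) (by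
        convert hdvd2 using 2; omega)
      exact ⟨α, hα⟩
    · rintro ⟨β, hβ⟩
      have hβodd : ¬ (2 : ℤ_[2]) ∣ β := by
        intro hc
        exact hodd (by rw [← hβ]; exact dvd_pow hc (by positivity))
      have := tower_dvd β hβodd (w₀ - 1) (by omega)
      rw [hβ, show w₀ - 1 + 2 = w₀ + 1 by omega, hA, two_pow_dvd_cast_iff] at this
      exact hndvd (by exact_mod_cast this)
end

section
/- Let n = 2^m·n₀ with m ≥ 1 and n₀ odd, and let a be an odd, n-th power free integer such that xⁿ − a is irreducible over ℚ. Let L = ℚ(ⁿ√a) and let M = ℚ((ⁿ√a)^{n₀}) be its subfield generated by the 2^m-th root of a. Let 𝔭 be a maximal ideal of O_M containing 2, with residue field k_𝔭 = O_M/𝔭. Then 𝔭 is unramified in O_L (every prime of O_L above 𝔭 has ramification index 1 over 𝔭), and the multiset of residue degrees [O_L/𝔓 : k_𝔭], as 𝔓 ranges over the primes of O_L above 𝔭, equals the multiset of degrees of the irreducible factors of x^{n₀} − 1 in k_𝔭[x]. -/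
open Polynomial NumberField UniqueFactorizationMonoid

attribute [local instance] Ideal.Quotient.field

set_option synthInstance.maxHeartbeats 1000000
set_option maxHeartbeats 4000000

/-- The multiset of degrees (with multiplicity) of the irreducible factors of `g` over `F`. -/
noncomputable def factorDegrees (F : Type*) [Field F] (g : F[X]) : Multiset ℕ :=
  letI := Classical.decEq F
  (normalizedFactors g).map natDegree

/-- The multiset of residue degrees over `𝔭` of the (distinct) primes of `S` lying above the
prime `𝔭` of `R`, i.e. of the prime factors of `𝔭·S`. -/
noncomputable def residueDegreesAbove (R S : Type*) [CommRing R] [CommRing S]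
    [IsDedekindDomain S] [Algebra R S] (𝔭 : Ideal R) : Multiset ℕ :=
  letI := Classical.decEq (Ideal S)
  (normalizedFactors (Ideal.map (algebraMap R S) 𝔭)).dedup.map fun P =>
    Ideal.inertiaDeg' 𝔭 P

section Aux

/-- If `f : A/I ≃+* B/J` and `I ≤ P`, then `A/P` is isomorphic to the quotient of `B` by the
corresponding ideal. -/
lemma aux_quotCorrespond {A B : Type*} [CommRing A] [CommRing B]
    {I : Ideal A} {J : Ideal B} (f : (A ⧸ I) ≃+* (B ⧸ J)) {P : Ideal A} (hIP : I ≤ P) :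
    Nonempty ((A ⧸ P) ≃+* B ⧸ (Ideal.comap (Ideal.Quotient.mk J)
      (Ideal.map (f : (A ⧸ I) →+* (B ⧸ J)) (Ideal.map (Ideal.Quotient.mk I) P)))) := by
  set X := Ideal.map (f : (A ⧸ I) →+* (B ⧸ J)) (Ideal.map (Ideal.Quotient.mk I) P) with hX
  have hJQ : J ≤ Ideal.comap (Ideal.Quotient.mk J) X := by
    conv_lhs => rw [← Ideal.mk_ker (I := J)]
    exact Ideal.ker_le_comap _
  have hmapQ : Ideal.map (Ideal.Quotient.mk J) (Ideal.comap (Ideal.Quotient.mk J) X) = X :=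
    Ideal.map_comap_of_surjective _ Ideal.Quotient.mk_surjective X
  exact ⟨((DoubleQuot.quotQuotEquivQuotOfLE hIP).symm.trans
    (Ideal.quotientEquiv (Ideal.map (Ideal.Quotient.mk I) P) X f rfl)).trans
    ((Ideal.quotEquivOfEq hmapQ.symm).trans (DoubleQuot.quotQuotEquivQuotOfLE hJQ))⟩

lemma aux_pow21 {k : Type*} [Field k] (h2 : (2 : k) = 0) :
    ∀ m : ℕ, ∀ x : k, x ^ (2 ^ m) = 1 → x = 1 := by
  intro m
  induction m with
  | zero => intro x hx; simpa using hx
  | succ m ih =>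
    intro x hx
    have hsq : (x ^ 2 ^ m) ^ 2 = 1 := by
      rw [← pow_mul, ← pow_succ]; exact hx
    have h0 : (x ^ 2 ^ m - 1) ^ 2 = 0 := by
      have hexp : (x ^ 2 ^ m - 1) ^ 2 = (x ^ 2 ^ m) ^ 2 - 2 * (x ^ 2 ^ m) + 1 := by ring
      rw [hexp, hsq, h2, zero_mul, sub_zero, one_add_one_eq_two, h2]
    have hx1 : x ^ 2 ^ m - 1 = 0 := by
      exact sq_eq_zero_iff.mp h0
    exact ih x (by rwa [sub_eq_zero] at hx1)

lemma aux_multiset_map {α β : Type*} {s : Multiset α} {t : Multiset β}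
    (hs : s.Nodup) (ht : t.Nodup) (E : {x // x ∈ s} ≃ {y // y ∈ t})
    (F : α → ℕ) (G : β → ℕ) (h : ∀ x : {x // x ∈ s}, F ↑x = G ↑(E x)) :
    s.map F = t.map G := by
  have key : s.attach.map (fun x => (E x : β)) = t := by
    refine (Multiset.Nodup.ext ?_ ht).mpr ?_
    · exact (Multiset.nodup_attach.mpr hs).map
        (fun x y hxy => E.injective (Subtype.ext hxy))
    · intro b
      constructor
      · intro hb
        rw [Multiset.mem_map] at hb
        obtain ⟨x, _, rfl⟩ := hb
        exact (E x).2
      · intro hb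
        exact Multiset.mem_map.mpr ⟨E.symm ⟨b, hb⟩, Multiset.mem_attach _ _, by simp⟩
  rw [← Multiset.attach_map_val' s F, ← key, Multiset.map_map]
  exact Multiset.map_congr rfl (fun x _ => h x)

end Aux

/-- **Lemma (splitting of a prime above 2 in `L/M`, `a` odd).** Let `n = 2^m·n₀` with `m ≥ 1`
and `n₀` odd, let `a` be an odd, `n`-th power free integer with `xⁿ − a` irreducible over `ℚ`,
let `L = ℚ(ⁿ√a)` and let `M = ℚ((ⁿ√a)^{n₀})` (the subfield generated by the `2^m`-th root of
`a`).  Let `𝔭` be a maximal ideal of `𝓞 M` containing `2`, with residue field `k_𝔭`.  Then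
`𝔭` is unramified in `𝓞 L` and the multiset of residue degrees of the primes of `𝓞 L` above
`𝔭` equals the multiset of degrees of the irreducible factors of `x^{n₀} − 1` in `k_𝔭[x]`. -/
theorem stmt_16 (m n₀ n : ℕ) (hm : 1 ≤ m) (hn₀ : Odd n₀) (hn : n = 2 ^ m * n₀) (a : ℤ)
    (haodd : Odd a)
    (hpf : ∀ q : ℕ, q.Prime → ¬ ((q : ℤ) ^ n ∣ a))
    (hirr : Irreducible ((X : ℚ[X]) ^ n - C (a : ℚ)))
    (L : Type*) [Field L] [NumberField L] (α : L)
    (hα : α ^ n = (a : L)) (hdegL : Module.finrank ℚ L = n)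
    (M : Type*) [Field M] [NumberField M] [Algebra M L] [IsScalarTower ℚ M L] (β : M)
    (hβ : algebraMap M L β = α ^ n₀) (hdegM : Module.finrank ℚ M = 2 ^ m)
    (𝔭 : Ideal (𝓞 M)) [𝔭.IsMaximal] (h2 : (2 : 𝓞 M) ∈ 𝔭) :
    (∀ P : Ideal (𝓞 L), P.IsMaximal → P.comap (algebraMap (𝓞 M) (𝓞 L)) = 𝔭 →
        Ideal.ramificationIdx' 𝔭 P = 1) ∧
    residueDegreesAbove (𝓞 M) (𝓞 L) 𝔭 =
      factorDegrees (𝓞 M ⧸ 𝔭) ((X : (𝓞 M ⧸ 𝔭)[X]) ^ n₀ - 1) := by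
  classical
  have hn₀pos : 0 < n₀ := hn₀.pos
  have hn₀ne : n₀ ≠ 0 := hn₀pos.ne'
  have hnne : n ≠ 0 := by
    rw [hn]; positivity
  have hML : Function.Injective (algebraMap M L) := (algebraMap M L).injective
  have hOLL : Function.Injective (algebraMap (𝓞 L) L) :=
    FaithfulSMul.algebraMap_injective (𝓞 L) L
  -- β is integral
  have hβpow : β ^ (2 ^ m) = (a : M) := by
    apply hML
    rw [map_pow, hβ, ← pow_mul, map_intCast]
    rw [show n₀ * 2 ^ m = n by rw [hn, mul_comm], hα]
  set βO : 𝓞 M := ⟨β, ⟨X ^ (2 ^ m) - C a,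
    monic_X_pow_sub_C a (pow_ne_zero m two_ne_zero), by
      rw [eval₂_sub, eval₂_X_pow, eval₂_C, eq_intCast, hβpow, sub_self]⟩⟩ with hβOdef
  set αO : 𝓞 L := ⟨α, ⟨X ^ n - C a, monic_X_pow_sub_C a hnne, by
      rw [eval₂_sub, eval₂_X_pow, eval₂_C, eq_intCast, hα, sub_self]⟩⟩ with hαOdef
  have hαOcoe : algebraMap (𝓞 L) L αO = α := rfl
  have hβOcoe : algebraMap (𝓞 M) M βO = β := rfl
  have hβOpow : βO ^ (2 ^ m) = ((a : ℤ) : 𝓞 M) := by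
    apply FaithfulSMul.algebraMap_injective (𝓞 M) M
    rw [map_pow, hβOcoe, hβpow, map_intCast]
  have hOMtoL : Function.Injective (algebraMap (𝓞 M) L) := by
    rw [IsScalarTower.algebraMap_eq (𝓞 M) M L]
    exact hML.comp (FaithfulSMul.algebraMap_injective (𝓞 M) M)
  have hinjOMOL : Function.Injective (algebraMap (𝓞 M) (𝓞 L)) := by
    intro x y hxy
    apply hOMtoL
    rw [IsScalarTower.algebraMap_eq (𝓞 M) (𝓞 L) L, RingHom.comp_apply, RingHom.comp_apply, hxy]
  haveI : Module.IsTorsionFree (𝓞 M) (𝓞 L) :=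
    (Module.isTorsionFree_iff_algebraMap_injective).mpr hinjOMOL
  have hβOL : algebraMap (𝓞 M) (𝓞 L) βO = αO ^ n₀ := by
    apply hOLL
    rw [map_pow, hαOcoe, ← hβ, ← IsScalarTower.algebraMap_apply (𝓞 M) (𝓞 L) L,
      IsScalarTower.algebraMap_apply (𝓞 M) M L, hβOcoe]
  haveI : Module.Finite (𝓞 M) (𝓞 L) := Module.Finite.of_restrictScalars_finite ℤ _ _
  have hαOint : IsIntegral (𝓞 M) αO := IsIntegral.of_finite (𝓞 M) αO
  -- minimal polynomials
  have hαint : IsIntegral ℚ α := IsIntegral.of_finite ℚ α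
  have hαintM : IsIntegral M α := IsIntegral.of_finite M α
  have hminQ : minpoly ℚ α = X ^ n - C (a : ℚ) :=
    (minpoly.eq_of_irreducible_of_monic hirr (by simp [hα]) (monic_X_pow_sub_C _ hnne)).symm
  have hdegQ : (minpoly ℚ α).natDegree = n := by
    rw [hminQ, natDegree_X_pow_sub_C]
  have hQtop : IntermediateField.adjoin ℚ {α} = ⊤ := by
    refine IntermediateField.eq_of_le_of_finrank_eq le_top ?_
    rw [IntermediateField.adjoin.finrank hαint, hdegQ, IntermediateField.finrank_top', hdegL]
  have hMtop : IntermediateField.adjoin M {α} = ⊤ :=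
    IntermediateField.adjoin_eq_top_of_adjoin_eq_top (F := ℚ) hQtop
  have hMLrank : Module.finrank M L = n₀ := by
    have h := Module.finrank_mul_finrank ℚ M L
    rw [hdegM, hdegL, hn] at h
    exact Nat.eq_of_mul_eq_mul_left (by positivity) h
  have hminM : minpoly M α = X ^ n₀ - C β := by
    have hdvd : minpoly M α ∣ X ^ n₀ - C β := minpoly.dvd M α (by simp [hβ])
    have hdeg : (X ^ n₀ - C β).natDegree = (minpoly M α).natDegree := by
      rw [natDegree_X_pow_sub_C, ← IntermediateField.adjoin.finrank hαintM, hMtop,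
        IntermediateField.finrank_top', hMLrank]
    exact (eq_of_monic_of_dvd_of_natDegree_le (minpoly.monic hαintM)
      (monic_X_pow_sub_C _ hn₀ne) hdvd hdeg.le).symm
  have hminO : minpoly (𝓞 M) αO = X ^ n₀ - C βO := by
    have h1 : (minpoly (𝓞 M) αO).map (algebraMap (𝓞 M) M) = X ^ n₀ - C β := by
      rw [← minpoly.isIntegrallyClosed_eq_field_fractions M L hαOint, hαOcoe, hminM]
    have h2' : (X ^ n₀ - C βO).map (algebraMap (𝓞 M) M) = X ^ n₀ - C β := by
      simp [Polynomial.map_sub, Polynomial.map_pow, hβOcoe]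
    exact Polynomial.map_injective _ (FaithfulSMul.algebraMap_injective (𝓞 M) M)
      (h1.trans h2'.symm)
  -- the conductor is coprime to 𝔭
  have hadjM : Algebra.adjoin M {algebraMap (𝓞 L) L αO} = ⊤ := by
    rw [hαOcoe, ← IntermediateField.adjoin_simple_toSubalgebra_of_isAlgebraic hαintM.isAlgebraic, hMtop,
      IntermediateField.top_toSubalgebra]
  have hcond := conductor_mul_differentIdeal (𝓞 M) M L αO hadjM
  have hprime𝔭 : 𝔭.IsPrime := (inferInstance : 𝔭.IsMaximal).isPrime
  have hoddnot : ∀ z : 𝓞 M, (∃ c : 𝓞 M, z = 2 * c + 1) → z ∉ 𝔭 := by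
    rintro z ⟨c, rfl⟩ hmem
    have h1 : (1 : 𝓞 M) ∈ 𝔭 := by
      have := 𝔭.sub_mem hmem (Ideal.mul_mem_right c _ h2)
      rwa [add_sub_cancel_left] at this
    exact hprime𝔭.ne_top ((Ideal.eq_top_iff_one _).mpr h1)
  have hcmem : algebraMap (𝓞 M) (𝓞 L) ((n₀ : 𝓞 M) * βO) ∈ conductor (𝓞 M) αO := by
    have hd1 : aeval αO (derivative (minpoly (𝓞 M) αO)) ∈ conductor (𝓞 M) αO := by
      have hmm := Ideal.mem_span_singleton_self (aeval αO (derivative (minpoly (𝓞 M) αO)))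
      rw [← hcond] at hmm
      exact Ideal.mul_le_left hmm
    have h3 : aeval αO (derivative (minpoly (𝓞 M) αO)) * αO
        = algebraMap (𝓞 M) (𝓞 L) ((n₀ : 𝓞 M) * βO) := by
      rw [hminO]
      simp only [derivative_sub, derivative_C, derivative_X_pow, sub_zero]
      rw [map_mul, map_natCast, map_pow, aeval_X, map_mul, map_natCast, hβOL,
        mul_assoc, ← pow_succ, Nat.sub_add_cancel hn₀pos]
      simp
    rw [← h3]
    exact Ideal.mul_mem_right αO _ hd1
  have hsup : (conductor (𝓞 M) αO).comap (algebraMap (𝓞 M) (𝓞 L)) ⊔ 𝔭 = ⊤ := by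
    by_contra hne
    have heq : (conductor (𝓞 M) αO).comap (algebraMap (𝓞 M) (𝓞 L)) ⊔ 𝔭 = 𝔭 :=
      ((inferInstance : 𝔭.IsMaximal).eq_of_le hne le_sup_right).symm
    have hmem𝔭 : (n₀ : 𝓞 M) * βO ∈ 𝔭 := by
      rw [← heq]
      exact Ideal.mem_sup_left (Ideal.mem_comap.mpr hcmem)
    rcases hprime𝔭.mem_or_mem hmem𝔭 with h | h
    · obtain ⟨c, hc⟩ := hn₀
      refine hoddnot (n₀ : 𝓞 M) ⟨(c : 𝓞 M), ?_⟩ h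
      rw [hc]; push_cast; ring
    · obtain ⟨c, hc⟩ := haodd
      have ha𝔭 : ((a : ℤ) : 𝓞 M) ∈ 𝔭 := by
        rw [← hβOpow]
        exact Ideal.pow_mem_of_mem 𝔭 h _ (by positivity)
      refine hoddnot ((a : ℤ) : 𝓞 M) ⟨(c : 𝓞 M), ?_⟩ ha𝔭
      rw [hc]; push_cast; ring
  -- residue field facts
  have h𝔭bot : 𝔭 ≠ ⊥ := by
    intro hbot
    rw [hbot] at h2
    exact (by norm_num : (2 : 𝓞 M) ≠ 0) (Ideal.mem_bot.mp h2)
  have h2k : (2 : 𝓞 M ⧸ 𝔭) = 0 := by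
    have := Ideal.Quotient.eq_zero_iff_mem.mpr h2
    rwa [map_ofNat] at this
  have hβ1 : Ideal.Quotient.mk 𝔭 βO = 1 := by
    apply aux_pow21 h2k m
    rw [← map_pow, hβOpow]
    obtain ⟨c, hc⟩ := haodd
    have hca : ((a : ℤ) : 𝓞 M) = 2 * (c : 𝓞 M) + 1 := by rw [hc]; push_cast; ring
    rw [hca, map_add, map_mul, map_one]
    rw [show (Ideal.Quotient.mk 𝔭) 2 = 0 from Ideal.Quotient.eq_zero_iff_mem.mpr h2]
    ring
  set Tm : (𝓞 M ⧸ 𝔭)[X] := (minpoly (𝓞 M) αO).map (Ideal.Quotient.mk 𝔭) with hTmdef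
  have hTmap : Tm = X ^ n₀ - 1 := by
    rw [hTmdef, hminO, Polynomial.map_sub, Polynomial.map_pow, map_X, map_C, hβ1, map_one]
  have hn₀k : ((n₀ : 𝓞 M ⧸ 𝔭)) ≠ 0 := by
    obtain ⟨c, hc⟩ := hn₀
    rw [hc]
    push_cast
    rw [h2k]
    simp
  have hTne : ((X : (𝓞 M ⧸ 𝔭)[X]) ^ n₀ - 1) ≠ 0 := by
    have := monic_X_pow_sub_C (1 : 𝓞 M ⧸ 𝔭) hn₀ne
    rw [map_one] at this
    exact this.ne_zero
  have hTmne : Tm ≠ 0 := by rw [hTmap]; exact hTne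
  have hTsep : ((X : (𝓞 M ⧸ 𝔭)[X]) ^ n₀ - 1).Separable := by
    have := separable_X_pow_sub_C (1 : 𝓞 M ⧸ 𝔭) hn₀k one_ne_zero
    rwa [map_one] at this
  have hTnodup : (normalizedFactors ((X : (𝓞 M ⧸ 𝔭)[X]) ^ n₀ - 1)).Nodup :=
    (squarefree_iff_nodup_normalizedFactors hTne).mp hTsep.squarefree
  have hTmnodup : (normalizedFactors Tm).Nodup := by rw [hTmap]; exact hTnodup
  have hmapne : Ideal.map (algebraMap (𝓞 M) (𝓞 L)) 𝔭 ≠ ⊥ := by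
    rw [Ne, Ideal.map_eq_bot_iff_of_injective hinjOMOL]
    exact h𝔭bot
  have hspanne : Ideal.span {Tm} ≠ ⊥ := by
    rw [Ne, Ideal.span_singleton_eq_bot]
    exact hTmne
  -- the ring isomorphism (𝓞 L)/𝔭(𝓞 L) ≃ k[X]/(Tm)
  have hadjinj : Function.Injective (algebraMap (Algebra.adjoin (𝓞 M) {αO}) (𝓞 L)) :=
    FaithfulSMul.algebraMap_injective (Algebra.adjoin (𝓞 M) {αO}) (𝓞 L)
  let f₀ : ((𝓞 L) ⧸ Ideal.map (algebraMap (𝓞 M) (𝓞 L)) 𝔭) ≃+*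
      ((𝓞 M ⧸ 𝔭)[X] ⧸ Ideal.span {Tm}) :=
    (quotAdjoinEquivQuotMap hsup hadjinj).symm.trans
      (((Algebra.adjoin.powerBasis' hαOint).quotientEquivQuotientMinpolyMap 𝔭).toRingEquiv.trans
        (Ideal.quotEquivOfEq (by rw [hTmdef, Algebra.adjoin.powerBasis'_minpoly_gen hαOint])))
  let Φ := IsDedekindDomain.normalizedFactorsEquivOfQuotEquiv f₀ hmapne hspanne
  let Θ := Ideal.normalizedFactorsEquivSpanNormalizedFactors hTmne
  let E := Φ.trans Θ.symm
  -- uniqueness of multiplicities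
  have hcount1 : ∀ g ∈ normalizedFactors Tm, (normalizedFactors Tm).count g = 1 :=
    fun g hg => Multiset.count_eq_one_of_mem hTmnodup hg
  have hJcount : ∀ J ∈ normalizedFactors (Ideal.map (algebraMap (𝓞 M) (𝓞 L)) 𝔭),
      (normalizedFactors (Ideal.map (algebraMap (𝓞 M) (𝓞 L)) 𝔭)).count J = 1 := by
    intro J hJ
    have h1 := normalizedFactorsEquivOfQuotEquiv_emultiplicity_eq_emultiplicity f₀ hmapne
      hspanne J hJ
    have h2' := emultiplicity_normalizedFactorsEquivSpanNormalizedFactors_symm_eq_emultiplicity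
      hTmne (Φ ⟨J, hJ⟩)
    have h4 : emultiplicity ((Θ.symm (Φ ⟨J, hJ⟩)) : (𝓞 M ⧸ 𝔭)[X]) Tm = 1 := by
      rw [emultiplicity_eq_count_normalizedFactors
          (irreducible_of_normalized_factor _ (Θ.symm (Φ ⟨J, hJ⟩)).2) hTmne,
        normalize_normalized_factor _ (Θ.symm (Φ ⟨J, hJ⟩)).2,
        hcount1 _ (Θ.symm (Φ ⟨J, hJ⟩)).2]
      norm_num
    have h3 : emultiplicity J (Ideal.map (algebraMap (𝓞 M) (𝓞 L)) 𝔭)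
        = ((normalizedFactors (Ideal.map (algebraMap (𝓞 M) (𝓞 L)) 𝔭)).count J : ℕ∞) := by
      rw [emultiplicity_eq_count_normalizedFactors (irreducible_of_normalized_factor J hJ)
        hmapne, normalize_normalized_factor J hJ]
    have hfin : ((normalizedFactors (Ideal.map (algebraMap (𝓞 M) (𝓞 L)) 𝔭)).count J : ℕ∞)
        = 1 := by
      rw [← h3, ← h1, ← h2']
      exact h4
    exact_mod_cast hfin
  have hnodupJ : (normalizedFactors (Ideal.map (algebraMap (𝓞 M) (𝓞 L)) 𝔭)).Nodup := by
    rw [Multiset.nodup_iff_count_le_one]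
    intro J
    by_cases hJ : J ∈ normalizedFactors (Ideal.map (algebraMap (𝓞 M) (𝓞 L)) 𝔭)
    · rw [hJcount J hJ]
    · rw [Multiset.count_eq_zero_of_notMem hJ]; norm_num
  -- Part 1 : unramified
  have part1 : ∀ P : Ideal (𝓞 L), P.IsMaximal → P.comap (algebraMap (𝓞 M) (𝓞 L)) = 𝔭 →
      Ideal.ramificationIdx' 𝔭 P = 1 := by
    intro P hPmax hPcomap
    have hPprime : P.IsPrime := hPmax.isPrime
    have hPbot : P ≠ ⊥ := by
      rintro rfl
      apply h𝔭bot
      rw [← hPcomap]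
      ext x
      simp only [Ideal.mem_comap, Ideal.mem_bot]
      exact ⟨fun hx => hinjOMOL (by simpa using hx), fun hx => by simp [hx]⟩
    have hPmem : P ∈ normalizedFactors (Ideal.map (algebraMap (𝓞 M) (𝓞 L)) 𝔭) := by
      rw [mem_normalizedFactors_iff hmapne]
      refine ⟨Ideal.prime_of_isPrime hPbot hPprime, Ideal.dvd_iff_le.mpr ?_⟩
      rw [Ideal.map_le_iff_le_comap, hPcomap]
    rw [Ideal.IsDedekindDomain.ramificationIdx'_eq_normalizedFactors_count hmapne hPprime hPbot,
      hJcount P hPmem]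
  -- Part 2 : residue degrees
  haveI : Fintype (𝓞 M ⧸ 𝔭) := @Fintype.ofFinite _ (Ideal.finiteQuotientOfFreeOfNeBot 𝔭 h𝔭bot)
  have hdegEq : ∀ x : {J // J ∈ normalizedFactors (Ideal.map (algebraMap (𝓞 M) (𝓞 L)) 𝔭)},
      Ideal.inertiaDeg' 𝔭 (x : Ideal (𝓞 L)) = ((E x : (𝓞 M ⧸ 𝔭)[X])).natDegree := by
    rintro ⟨J, hJ⟩
    have hg : (E ⟨J, hJ⟩ : (𝓞 M ⧸ 𝔭)[X]) ∈ normalizedFactors Tm := (E ⟨J, hJ⟩).2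
    have hgx : (E ⟨J, hJ⟩ : (𝓞 M ⧸ 𝔭)[X]) ≠ 0 :=
      (irreducible_of_normalized_factor _ hg).ne_zero
    have hIP : Ideal.map (algebraMap (𝓞 M) (𝓞 L)) 𝔭 ≤ J :=
      Ideal.le_of_dvd (dvd_of_mem_normalizedFactors hJ)
    have hJbot : J ≠ ⊥ := fun hb => hmapne (le_bot_iff.mp (hb ▸ hIP))
    have hJprime : J.IsPrime := Ideal.isPrime_of_prime (prime_of_normalized_factor J hJ)
    have hJcomap : Ideal.comap (algebraMap (𝓞 M) (𝓞 L)) J = 𝔭 := by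
      have hle : 𝔭 ≤ Ideal.comap (algebraMap (𝓞 M) (𝓞 L)) J :=
        Ideal.map_le_iff_le_comap.mp hIP
      have hnetop : Ideal.comap (algebraMap (𝓞 M) (𝓞 L)) J ≠ ⊤ :=
        Ideal.comap_ne_top _ hJprime.ne_top
      exact ((inferInstance : 𝔭.IsMaximal).eq_of_le hnetop hle).symm
    haveI : J.LiesOver 𝔭 := ⟨hJcomap.symm⟩
    obtain ⟨e⟩ := aux_quotCorrespond f₀ hIP
    have hspan : (Ideal.comap (Ideal.Quotient.mk (Ideal.span {Tm}))
        (Ideal.map (f₀ : ((𝓞 L) ⧸ Ideal.map (algebraMap (𝓞 M) (𝓞 L)) 𝔭) →+*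
          ((𝓞 M ⧸ 𝔭)[X] ⧸ Ideal.span {Tm}))
          (Ideal.map (Ideal.Quotient.mk (Ideal.map (algebraMap (𝓞 M) (𝓞 L)) 𝔭)) J)))
        = Ideal.span {(E ⟨J, hJ⟩ : (𝓞 M ⧸ 𝔭)[X])} := by
      have hΘ : Θ (E ⟨J, hJ⟩) = Φ ⟨J, hJ⟩ := by
        simp only [E, Equiv.trans_apply, Equiv.apply_symm_apply]
      have : (Φ ⟨J, hJ⟩ : Ideal (𝓞 M ⧸ 𝔭)[X]) = Ideal.span {(E ⟨J, hJ⟩ : (𝓞 M ⧸ 𝔭)[X])} := by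
        rw [← hΘ]
        rfl
      rw [← this]
      rfl
    rw [hspan] at e
    haveI : Fintype (𝓞 L ⧸ J) := @Fintype.ofFinite _ (Ideal.finiteQuotientOfFreeOfNeBot J hJbot)
    haveI : Fintype ((𝓞 M ⧸ 𝔭)[X] ⧸ Ideal.span {(E ⟨J, hJ⟩ : (𝓞 M ⧸ 𝔭)[X])}) :=
      Fintype.ofEquiv _ e.toEquiv
    rw [Ideal.inertiaDeg'_algebraMap]
    have hcard1 : Fintype.card (𝓞 L ⧸ J)
        = Fintype.card (𝓞 M ⧸ 𝔭) ^ Module.finrank (𝓞 M ⧸ 𝔭) (𝓞 L ⧸ J) :=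
      Module.card_eq_pow_finrank
    have hfr : Module.finrank (𝓞 M ⧸ 𝔭)
        ((𝓞 M ⧸ 𝔭)[X] ⧸ Ideal.span {(E ⟨J, hJ⟩ : (𝓞 M ⧸ 𝔭)[X])})
        = ((E ⟨J, hJ⟩ : (𝓞 M ⧸ 𝔭)[X])).natDegree := by
      exact (AdjoinRoot.powerBasis hgx).finrank
    have hcard2 : Fintype.card ((𝓞 M ⧸ 𝔭)[X] ⧸ Ideal.span {(E ⟨J, hJ⟩ : (𝓞 M ⧸ 𝔭)[X])})
        = Fintype.card (𝓞 M ⧸ 𝔭) ^ ((E ⟨J, hJ⟩ : (𝓞 M ⧸ 𝔭)[X])).natDegree := by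
      rw [← hfr]
      exact Module.card_eq_pow_finrank
    have hcc : Fintype.card (𝓞 L ⧸ J)
        = Fintype.card ((𝓞 M ⧸ 𝔭)[X] ⧸ Ideal.span {(E ⟨J, hJ⟩ : (𝓞 M ⧸ 𝔭)[X])}) :=
      Fintype.card_congr e.toEquiv
    have hpow : Fintype.card (𝓞 M ⧸ 𝔭) ^ Module.finrank (𝓞 M ⧸ 𝔭) (𝓞 L ⧸ J)
        = Fintype.card (𝓞 M ⧸ 𝔭) ^ ((E ⟨J, hJ⟩ : (𝓞 M ⧸ 𝔭)[X])).natDegree := by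
      rw [← hcard1, ← hcard2]
      exact hcc
    exact Nat.pow_right_injective Fintype.one_lt_card hpow
  refine ⟨part1, ?_⟩
  rw [residueDegreesAbove, factorDegrees]
  rw [(@Multiset.dedup_eq_self _ (Classical.decEq _) _).mpr hnodupJ]
  rw [← hTmap]
  exact aux_multiset_map hnodupJ hTmnodup E _ _ hdegEq
end
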